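/- Any polynomial that is a finite product of factors of the form (1+t) and (1 + c t + t^2) with real c ≥ 2 has the mountain property: its coefficients strictly increase up to the middle coefficient(s), i.e. if the product has degree n with coefficients a_0, ..., a_n, then a_i < a_{i+1} whenever i+1 ≤ n/2. -/

import Mathlib

open Polynomial

/-- The invariant: monic, positive coefficients, palindromic, and mountain. -/
def GoodPoly (p : ℝ[X]) : Prop :=
  p.Monic ∧ (∀ j ≤ p.natDegree, 0 < p.coeff j) ∧
  (∀ j k, j + k = p.natDegree → p.coeff j = p.coeff k) ∧
  (∀ i, 2 * (i + 1) ≤ p.natDegree → p.coeff i < p.coeff (i + 1))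

lemma goodPoly_one : GoodPoly 1 := by
  refine ⟨monic_one, ?_, ?_, ?_⟩ <;> simp_all

lemma GoodPoly.nonneg {p : ℝ[X]} (h : GoodPoly p) (j : ℕ) : 0 ≤ p.coeff j := by
  rcases le_or_gt j p.natDegree with hj | hj
  · exact (h.2.1 j hj).le
  · simp [coeff_eq_zero_of_natDegree_lt hj]

lemma GoodPoly.step {p : ℝ[X]} (h : GoodPoly p) (j : ℕ) (hj : 2 * j + 1 ≤ p.natDegree) :
    p.coeff j ≤ p.coeff (j + 1) := by
  rcases lt_or_eq_of_le hj with hlt | heq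
  · exact (h.2.2.2 j (by omega)).le
  · exact le_of_eq (h.2.2.1 j (j + 1) (by omega))

lemma GoodPoly.skip {p : ℝ[X]} (h : GoodPoly p) (j : ℕ) (hj : 2 * j + 2 ≤ p.natDegree) :
    p.coeff j ≤ p.coeff (j + 2) := by
  rcases lt_or_eq_of_le hj with hlt | heq
  · calc p.coeff j ≤ p.coeff (j + 1) := h.step j (by omega)
      _ ≤ p.coeff (j + 2) := h.step (j + 1) (by omega)
  · exact le_of_eq (h.2.2.1 j (j + 2) (by omega))

lemma goodPoly_linear_mul {p : ℝ[X]} (h : GoodPoly p) : GoodPoly ((1 + X) * p) := by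
  obtain ⟨hm, hpos, hpal, hmt⟩ := h
  have hmon : (1 + X : ℝ[X]).Monic := by monicity!
  have hd1 : (1 + X : ℝ[X]).natDegree = 1 := by compute_degree!
  have hq : ((1 + X) * p).natDegree = p.natDegree + 1 := by
    rw [hmon.natDegree_mul hm, hd1, add_comm]
  have hX0 : (X * p).coeff 0 = 0 := by
    simp [coeff_mul_X_pow']
  have hc0 : ((1 + X) * p).coeff 0 = p.coeff 0 := by
    rw [add_mul, one_mul, coeff_add, hX0, add_zero]
  have hcs : ∀ k, ((1 + X) * p).coeff (k + 1) = p.coeff (k + 1) + p.coeff k := by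
    intro k
    rw [add_mul, one_mul, coeff_add, coeff_X_mul]
  have hz : ∀ j, p.natDegree < j → p.coeff j = 0 := fun j hj =>
    coeff_eq_zero_of_natDegree_lt hj
  have hnn : ∀ j, 0 ≤ p.coeff j := GoodPoly.nonneg ⟨hm, hpos, hpal, hmt⟩
  refine ⟨hmon.mul hm, ?_, ?_, ?_⟩
  · intro j hj
    rw [hq] at hj
    match j with
    | 0 => rw [hc0]; exact hpos 0 (Nat.zero_le _)
    | k + 1 =>
      rw [hcs k]
      exact add_pos_of_nonneg_of_pos (hnn _) (hpos k (by omega))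
  · intro j k hjk
    rw [hq] at hjk
    match j, k with
    | 0, 0 => rfl
    | 0, k' + 1 =>
      rw [hc0, hcs k']
      have hk' : k' = p.natDegree := by omega
      rw [hk', hz (p.natDegree + 1) (by omega), zero_add]
      exact hpal 0 p.natDegree (by omega)
    | j' + 1, 0 =>
      rw [hc0, hcs j']
      have hj' : j' = p.natDegree := by omega
      rw [hj', hz (p.natDegree + 1) (by omega), zero_add]
      exact hpal p.natDegree 0 (by omega)
    | j' + 1, k' + 1 =>
      rw [hcs j', hcs k']
      rw [hpal (j' + 1) k' (by omega), hpal j' (k' + 1) (by omega), add_comm]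
  · intro i hi
    rw [hq] at hi
    match i with
    | 0 =>
      rw [hc0, hcs 0]
      have : 0 < p.coeff 1 := hpos 1 (by omega)
      linarith
    | j + 1 =>
      rw [hcs j, hcs (j + 1)]
      have h1 : p.coeff j < p.coeff (j + 1) := hmt j (by omega)
      have h2 : p.coeff (j + 1) ≤ p.coeff (j + 2) :=
        GoodPoly.step ⟨hm, hpos, hpal, hmt⟩ (j + 1) (by omega)
      linarith

lemma goodPoly_quad_mul {p : ℝ[X]} {c : ℝ} (hc : 2 ≤ c) (h : GoodPoly p) :
    GoodPoly ((1 + C c * X + X ^ 2) * p) := by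
  obtain ⟨hm, hpos, hpal, hmt⟩ := h
  have hG : GoodPoly p := ⟨hm, hpos, hpal, hmt⟩
  have hmon : (1 + C c * X + X ^ 2 : ℝ[X]).Monic := by monicity!
  have hd2 : (1 + C c * X + X ^ 2 : ℝ[X]).natDegree = 2 := by compute_degree!
  have hq : ((1 + C c * X + X ^ 2) * p).natDegree = p.natDegree + 2 := by
    rw [hmon.natDegree_mul hm, hd2, add_comm]
  have hexp : (1 + C c * X + X ^ 2) * p = p + C c * (X * p) + X ^ 2 * p := by ring
  have hX0 : (X * p).coeff 0 = 0 := by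
    simp [coeff_mul_X_pow']
  have hX20 : (X ^ 2 * p).coeff 0 = 0 := by
    rw [mul_comm, coeff_mul_X_pow' p 2 0]; simp
  have hX21 : (X ^ 2 * p).coeff 1 = 0 := by
    rw [mul_comm, coeff_mul_X_pow' p 2 1]; simp
  have hc0 : ((1 + C c * X + X ^ 2) * p).coeff 0 = p.coeff 0 := by
    rw [hexp, coeff_add, coeff_add, coeff_C_mul, hX0, hX20, mul_zero, add_zero, add_zero]
  have hc1 : ((1 + C c * X + X ^ 2) * p).coeff 1 = p.coeff 1 + c * p.coeff 0 := by
    rw [hexp, coeff_add, coeff_add, coeff_C_mul, hX21, add_zero]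
    rw [show (1:ℕ) = 0 + 1 from rfl, coeff_X_mul]
  have hcs : ∀ k, ((1 + C c * X + X ^ 2) * p).coeff (k + 2)
      = p.coeff (k + 2) + c * p.coeff (k + 1) + p.coeff k := by
    intro k
    rw [hexp, coeff_add, coeff_add, coeff_C_mul]
    rw [show k + 2 = (k + 1) + 1 from rfl, coeff_X_mul]
    rw [show (k + 1) + 1 = k + 2 from rfl, coeff_X_pow_mul]
  have hz : ∀ j, p.natDegree < j → p.coeff j = 0 := fun j hj =>
    coeff_eq_zero_of_natDegree_lt hj
  have hnn : ∀ j, 0 ≤ p.coeff j := hG.nonneg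
  have hc0' : (0:ℝ) < c := by linarith
  refine ⟨hmon.mul hm, ?_, ?_, ?_⟩
  · intro j hj
    rw [hq] at hj
    match j with
    | 0 => rw [hc0]; exact hpos 0 (Nat.zero_le _)
    | 1 =>
      rw [hc1]
      exact add_pos_of_nonneg_of_pos (hnn _) (mul_pos hc0' (hpos 0 (Nat.zero_le _)))
    | k + 2 =>
      rw [hcs k]
      have : 0 < p.coeff k := hpos k (by omega)
      have : 0 ≤ c * p.coeff (k + 1) := mul_nonneg hc0'.le (hnn _)
      have : 0 ≤ p.coeff (k + 2) := hnn _
      linarith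
  · -- palindrome: first prove for j ≤ k, then symmetrize
    have key : ∀ j k, j ≤ k → j + k = p.natDegree + 2 →
        ((1 + C c * X + X ^ 2) * p).coeff j = ((1 + C c * X + X ^ 2) * p).coeff k := by
      intro j k hle hjk
      match j, k with
      | 0, 0 => rfl
      | 0, k' + 1 =>
        match k' with
        | 0 => omega
        | k'' + 1 =>
          rw [hc0, hcs k'']
          have hk'' : k'' = p.natDegree := by omega
          rw [hk'', hz (p.natDegree + 2) (by omega), hz (p.natDegree + 1) (by omega)]
          rw [hpal 0 p.natDegree (by omega)]; ring
      | 1, k' + 1 =>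
        match k' with
        | 0 => rfl
        | k'' + 1 =>
          rw [hc1, hcs k'']
          have hk'' : k'' + 1 = p.natDegree := by omega
          rw [hz (k'' + 2) (by omega), hpal 0 (k'' + 1) (by omega),
            hpal 1 k'' (by omega)]
          ring
      | j' + 2, k =>
        have : ∃ k'', k = k'' + 2 := ⟨k - 2, by omega⟩
        obtain ⟨k'', rfl⟩ := this
        rw [hcs j', hcs k'']
        rw [hpal (j' + 2) k'' (by omega), hpal (j' + 1) (k'' + 1) (by omega),
          hpal j' (k'' + 2) (by omega)]
        ring
    intro j k hjk
    rw [hq] at hjk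
    rcases le_total j k with hle | hle
    · exact key j k hle hjk
    · exact (key k j hle (by omega)).symm
  · intro i hi
    rw [hq] at hi
    match i with
    | 0 =>
      rw [hc0, hc1]
      have h0 : 0 < p.coeff 0 := hpos 0 (Nat.zero_le _)
      have h1 : 0 ≤ p.coeff 1 := hnn 1
      nlinarith
    | 1 =>
      rw [hc1, hcs 0]
      have h01 : p.coeff 0 < p.coeff 1 := hmt 0 (by omega)
      have h2 : 0 ≤ p.coeff 2 := hnn 2
      nlinarith
    | k + 2 =>
      rw [hcs k, hcs (k + 1)]
      have h1 : p.coeff (k + 1) ≤ p.coeff (k + 3) := hG.skip (k + 1) (by omega)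
      have h2 : p.coeff k < p.coeff (k + 1) := hmt k (by omega)
      have h3 : p.coeff (k + 1) ≤ p.coeff (k + 2) := hG.step (k + 1) (by omega)
      nlinarith [mul_nonneg (by linarith : (0:ℝ) ≤ c - 2)
        (by linarith : (0:ℝ) ≤ p.coeff (k + 2) - p.coeff (k + 1))]

lemma goodPoly_prod (L : List (Polynomial ℝ))
    (hL : ∀ f ∈ L, f = 1 + X ∨ ∃ c : ℝ, 2 ≤ c ∧ f = 1 + C c * X + X ^ 2) :
    GoodPoly L.prod := by
  induction L with
  | nil => exact goodPoly_one
  | cons f t ih =>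
    have ht : GoodPoly t.prod := ih (fun g hg => hL g (List.mem_cons_of_mem f hg))
    rw [List.prod_cons]
    rcases hL f (List.mem_cons_self (a := f) (l := t)) with rfl | ⟨c, hc, rfl⟩
    · exact goodPoly_linear_mul ht
    · exact goodPoly_quad_mul hc ht

theorem mountain_property (L : List (Polynomial ℝ))
    (hL : ∀ f ∈ L, f = 1 + X ∨ ∃ c : ℝ, 2 ≤ c ∧ f = 1 + C c * X + X ^ 2)
    (i : ℕ) (hi : 2 * (i + 1) ≤ L.prod.natDegree) :
    L.prod.coeff i < L.prod.coeff (i + 1) := by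
  exact (goodPoly_prod L hL).2.2.2 i hi
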